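/- For any positive definite symmetric matrix S, Skew(S) ≤ λ_max(S)/λ_min(S) - 1, where λ_max and λ_min are the largest and smallest eigenvalues of S. -/

import Mathlib

open Matrix

/-- `Skew S = sup_{x ≠ 0} ‖x‖₂‖Sx‖₂/(xᵀSx) - 1`, as a supremum over unit vectors. -/
noncomputable def skew {d : ℕ} (S : Matrix (Fin d) (Fin d) ℝ) : ℝ :=
  ⨆ u : {u : Fin d → ℝ // ∑ i, u i ^ 2 = 1},
    Real.sqrt (∑ i, (S.mulVec u.1 i) ^ 2) / (∑ i, u.1 i * S.mulVec u.1 i) - 1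

/-- The smallest eigenvalue of a symmetric matrix, as the infimum of the Rayleigh
quotient over unit vectors. -/
noncomputable def lambdaMin {d : ℕ} (M : Matrix (Fin d) (Fin d) ℝ) : ℝ :=
  ⨅ u : {u : Fin d → ℝ // ∑ i, u i ^ 2 = 1}, ∑ i, u.1 i * M.mulVec u.1 i

/-- The largest eigenvalue of a symmetric matrix, as the supremum of the Rayleigh
quotient over unit vectors. -/
noncomputable def lambdaMax {d : ℕ} (M : Matrix (Fin d) (Fin d) ℝ) : ℝ :=
  ⨆ u : {u : Fin d → ℝ // ∑ i, u i ^ 2 = 1}, ∑ i, u.1 i * M.mulVec u.1 i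

open scoped MatrixOrder in
/-- Cauchy–Schwarz for the inner product induced by a positive definite matrix. -/
lemma posDef_cauchy_schwarz {d : ℕ} (S : Matrix (Fin d) (Fin d) ℝ) (hS : S.PosDef)
    (x y : Fin d → ℝ) :
    (x ⬝ᵥ S *ᵥ y) ^ 2 ≤ (x ⬝ᵥ S *ᵥ x) * (y ⬝ᵥ S *ᵥ y) := by
  obtain ⟨R, hRsa, -, hRR⟩ := CFC.exists_sqrt_of_isSelfAdjoint_of_quasispectrumRestricts hS.1
    (QuasispectrumRestricts.nnreal_of_nonneg hS.posSemidef.nonneg)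
  have hsym : Rᵀ = R := by
    simpa [IsSelfAdjoint, Matrix.star_eq_conjTranspose,
      Matrix.conjTranspose_eq_transpose_of_trivial] using hRsa
  have key : ∀ a b : Fin d → ℝ, a ⬝ᵥ S *ᵥ b = (R *ᵥ a) ⬝ᵥ (R *ᵥ b) := by
    intro a b
    calc a ⬝ᵥ S *ᵥ b = a ⬝ᵥ (R * R) *ᵥ b := by rw [hRR]
      _ = a ⬝ᵥ R *ᵥ (R *ᵥ b) := by rw [mulVec_mulVec]
      _ = (a ᵥ* R) ⬝ᵥ (R *ᵥ b) := by rw [dotProduct_mulVec]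
      _ = (Rᵀ *ᵥ a) ⬝ᵥ (R *ᵥ b) := by rw [mulVec_transpose]
      _ = _ := by rw [hsym]
  rw [key x y, key x x, key y y]
  have := Finset.sum_mul_sq_le_sq_mul_sq Finset.univ (R *ᵥ x) (R *ᵥ y)
  simpa [dotProduct, pow_two, mul_comm] using this

/-- Existence of an extremum of the Rayleigh quotient on the unit sphere. -/
lemma rayleigh_exists_extremum {d : ℕ} (hd : 0 < d) (S : Matrix (Fin d) (Fin d) ℝ) :
    ∃ u₀ u₁ : Fin d → ℝ, (∑ i, u₀ i ^ 2 = 1) ∧ (∑ i, u₁ i ^ 2 = 1) ∧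
      ∀ u : Fin d → ℝ, (∑ i, u i ^ 2 = 1) →
        u₀ ⬝ᵥ S *ᵥ u₀ ≤ u ⬝ᵥ S *ᵥ u ∧ u ⬝ᵥ S *ᵥ u ≤ u₁ ⬝ᵥ S *ᵥ u₁ := by
  set Sph : Set (Fin d → ℝ) := {u | ∑ i, u i ^ 2 = 1} with hSph
  have hcont : Continuous fun u : Fin d → ℝ => u ⬝ᵥ S *ᵥ u := by
    have : (fun u : Fin d → ℝ => u ⬝ᵥ S *ᵥ u) =
        fun u => ∑ i, u i * ∑ j, S i j * u j := by
      funext u; rfl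
    rw [this]
    refine continuous_finset_sum _ fun i _ => ((continuous_apply i).mul ?_)
    exact continuous_finset_sum _ fun j _ => continuous_const.mul (continuous_apply j)
  have hclosed : IsClosed Sph := by
    have : Continuous fun u : Fin d → ℝ => ∑ i, u i ^ 2 := by continuity
    exact isClosed_eq this continuous_const
  have hbdd : Bornology.IsBounded Sph := by
    rw [Metric.isBounded_iff_subset_closedBall 0]
    refine ⟨1, fun u hu => ?_⟩
    simp only [Metric.mem_closedBall, dist_zero_right]
    rw [pi_norm_le_iff_of_nonneg zero_le_one]
    intro i
    rw [Real.norm_eq_abs, abs_le_one_iff_mul_self_le_one, ← sq]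
    calc u i ^ 2 ≤ ∑ j, u j ^ 2 :=
          Finset.single_le_sum (fun j _ => sq_nonneg (u j)) (Finset.mem_univ i)
      _ = 1 := hu
  have hcomp : IsCompact Sph := Metric.isCompact_of_isClosed_isBounded hclosed hbdd
  have hne : Sph.Nonempty := by
    refine ⟨Pi.single ⟨0, hd⟩ 1, ?_⟩
    simp [hSph, Pi.single_apply, Finset.sum_ite_eq']
  obtain ⟨u₀, hu₀, hmin⟩ := hcomp.exists_isMinOn hne hcont.continuousOn
  obtain ⟨u₁, hu₁, hmax⟩ := hcomp.exists_isMaxOn hne hcont.continuousOn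
  exact ⟨u₀, u₁, hu₀, hu₁, fun u hu => ⟨hmin hu, hmax hu⟩⟩

/-- The skewness is upper bounded by the ratio of extreme eigenvalues minus 1. -/
theorem skew_le_eigenvalue_ratio (d : ℕ) (hd : 0 < d) (S : Matrix (Fin d) (Fin d) ℝ)
    (hS : S.PosDef) : skew S ≤ lambdaMax S / lambdaMin S - 1 := by
  obtain ⟨u₀, u₁, hu₀, hu₁, hext⟩ := rayleigh_exists_extremum hd S
  haveI hne : Nonempty {u : Fin d → ℝ // ∑ i, u i ^ 2 = 1} := ⟨⟨u₀, hu₀⟩⟩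
  -- each unit vector is nonzero
  have hunit_ne : ∀ u : Fin d → ℝ, (∑ i, u i ^ 2 = 1) → u ≠ 0 := by
    intro u hu h
    rw [h] at hu
    simp at hu
  -- the Rayleigh quotient of a unit vector is positive
  have hq_pos : ∀ u : Fin d → ℝ, (∑ i, u i ^ 2 = 1) → 0 < u ⬝ᵥ S *ᵥ u := by
    intro u hu
    simpa using hS.dotProduct_mulVec_pos (hunit_ne u hu)
  -- identify lambdaMin with the attained minimum
  have hrange : ∀ u : {u : Fin d → ℝ // ∑ i, u i ^ 2 = 1},
      (∑ i, u.1 i * S.mulVec u.1 i) = u.1 ⬝ᵥ S *ᵥ u.1 := fun u => rfl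
  have hmin_eq : lambdaMin S = u₀ ⬝ᵥ S *ᵥ u₀ := by
    have h1 : lambdaMin S
        = ⨅ u : {u : Fin d → ℝ // ∑ i, u i ^ 2 = 1}, u.1 ⬝ᵥ S *ᵥ u.1 := rfl
    rw [h1]
    refine le_antisymm ?_ (le_ciInf fun u => (hext u.1 u.2).1)
    have hbb : BddBelow (Set.range fun u : {u : Fin d → ℝ // ∑ i, u i ^ 2 = 1} =>
        u.1 ⬝ᵥ S *ᵥ u.1) := by
      refine ⟨u₀ ⬝ᵥ S *ᵥ u₀, ?_⟩
      rintro x ⟨u, rfl⟩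
      exact (hext u.1 u.2).1
    exact ciInf_le hbb ⟨u₀, hu₀⟩
  have hmax_eq : lambdaMax S = u₁ ⬝ᵥ S *ᵥ u₁ := by
    have h1 : lambdaMax S
        = ⨆ u : {u : Fin d → ℝ // ∑ i, u i ^ 2 = 1}, u.1 ⬝ᵥ S *ᵥ u.1 := rfl
    rw [h1]
    refine le_antisymm (ciSup_le fun u => (hext u.1 u.2).2) ?_
    have hbb : BddAbove (Set.range fun u : {u : Fin d → ℝ // ∑ i, u i ^ 2 = 1} =>
        u.1 ⬝ᵥ S *ᵥ u.1) := by
      refine ⟨u₁ ⬝ᵥ S *ᵥ u₁, ?_⟩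
      rintro x ⟨u, rfl⟩
      exact (hext u.1 u.2).2
    exact le_ciSup hbb ⟨u₁, hu₁⟩
  set lmin := lambdaMin S with hlmin
  set lmax := lambdaMax S with hlmax
  have hmin_pos : 0 < lmin := hmin_eq ▸ hq_pos u₀ hu₀
  have hmin_le : ∀ u : Fin d → ℝ, (∑ i, u i ^ 2 = 1) → lmin ≤ u ⬝ᵥ S *ᵥ u :=
    fun u hu => hmin_eq ▸ (hext u hu).1
  have hle_max : ∀ u : Fin d → ℝ, (∑ i, u i ^ 2 = 1) → u ⬝ᵥ S *ᵥ u ≤ lmax :=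
    fun u hu => hmax_eq ▸ (hext u hu).2
  have hmin_le_max : lmin ≤ lmax := le_trans (hmin_le u₁ hu₁) (hle_max u₁ hu₁)
  have hmax_pos : 0 < lmax := lt_of_lt_of_le hmin_pos hmin_le_max
  -- the Rayleigh bound for arbitrary vectors, by scaling
  have hscale : ∀ v : Fin d → ℝ, v ⬝ᵥ S *ᵥ v ≤ lmax * ∑ i, v i ^ 2 := by
    intro v
    by_cases hv : v = 0
    · simp [hv]
    · have hnpos : 0 < ∑ i, v i ^ 2 := by
        obtain ⟨i, hi⟩ := Function.ne_iff.1 hv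
        exact Finset.sum_pos' (fun j _ => sq_nonneg (v j))
          ⟨i, Finset.mem_univ i, by
            have hvi : v i ≠ 0 := by simpa using hi
            exact lt_of_le_of_ne (sq_nonneg _) (Ne.symm (pow_ne_zero 2 hvi))⟩
      set n := ∑ i, v i ^ 2 with hn
      set c := (Real.sqrt n)⁻¹ with hc
      have hc2 : c ^ 2 = n⁻¹ := by
        rw [hc, ← Real.sqrt_inv, Real.sq_sqrt (by positivity)]
      have hw : ∑ i, (c • v) i ^ 2 = 1 := by
        have : ∑ i, (c • v) i ^ 2 = c ^ 2 * n := by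
          rw [hn, Finset.mul_sum]
          exact Finset.sum_congr rfl fun i _ => by simp [mul_pow]
        rw [this, hc2, inv_mul_cancel₀ (ne_of_gt hnpos)]
      have hqw : (c • v) ⬝ᵥ S *ᵥ (c • v) = c ^ 2 * (v ⬝ᵥ S *ᵥ v) := by
        rw [mulVec_smul, smul_dotProduct, dotProduct_smul]
        simp [pow_two, mul_assoc]
      have := hle_max (c • v) hw
      rw [hqw, hc2] at this
      calc v ⬝ᵥ S *ᵥ v = n * (n⁻¹ * (v ⬝ᵥ S *ᵥ v)) := by
            field_simp
        _ ≤ n * lmax := by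
            exact mul_le_mul_of_nonneg_left this (le_of_lt hnpos)
        _ = lmax * n := mul_comm _ _
  -- main bound for each unit vector
  refine ciSup_le fun u => ?_
  obtain ⟨u, hu⟩ := u
  simp only
  set q := u ⬝ᵥ S *ᵥ u with hqdef
  have hq : 0 < q := hq_pos u hu
  set v := S.mulVec u with hv
  set n := ∑ i, v i ^ 2 with hn
  have hn0 : 0 ≤ n := Finset.sum_nonneg fun i _ => sq_nonneg _
  have hSsym : Sᵀ = S := by
    have := hS.1
    simpa [Matrix.IsHermitian, Matrix.conjTranspose_eq_transpose_of_trivial] using this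
  have hrep : u ⬝ᵥ S *ᵥ v = n := by
    calc u ⬝ᵥ S *ᵥ v = (u ᵥ* S) ⬝ᵥ v := dotProduct_mulVec u S v
      _ = (Sᵀ *ᵥ u) ⬝ᵥ v := by rw [mulVec_transpose]
      _ = v ⬝ᵥ v := by rw [hSsym, ← hv]
      _ = n := by simp [dotProduct, hn, pow_two]
  have hCS := posDef_cauchy_schwarz S hS u v
  rw [hrep] at hCS
  have hvS : v ⬝ᵥ S *ᵥ v ≤ lmax * n := hscale v
  have hn_le : n ≤ q * lmax := by
    rcases eq_or_lt_of_le hn0 with h | h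
    · rw [← h]; exact le_of_lt (mul_pos hq hmax_pos)
    · nlinarith [mul_le_mul_of_nonneg_left hvS (le_of_lt hq)]
  -- conclude
  have hterm : Real.sqrt n / q ≤ lmax / lmin := by
    rw [div_le_div_iff₀ hq hmin_pos]
    have h1 : Real.sqrt n ≤ Real.sqrt (q * lmax) := Real.sqrt_le_sqrt hn_le
    have h2 : lmin ≤ Real.sqrt (q * lmax) := by
      rw [Real.le_sqrt (le_of_lt hmin_pos)]
      · nlinarith [hmin_le u hu]
      · exact le_of_lt (mul_pos hq hmax_pos)
    calc Real.sqrt n * lmin ≤ Real.sqrt (q * lmax) * Real.sqrt (q * lmax) :=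
          mul_le_mul h1 h2 (le_of_lt hmin_pos) (Real.sqrt_nonneg _)
      _ = q * lmax := Real.mul_self_sqrt (le_of_lt (mul_pos hq hmax_pos))
      _ = lmax * q := mul_comm _ _
  have : Real.sqrt (∑ i, (S.mulVec u i) ^ 2) / (∑ i, u i * S.mulVec u i)
      = Real.sqrt n / q := rfl
  rw [this]
  linarith
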